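/- arXiv:2603.30009 — 7 statements merged into one kernel-verified Lean document; each statement's English description precedes it below -/
import Mathlib

section
/- If a simple graph G with p vertices and q ≥ 1 edges admits an additively graceful labeling, then q ≥ 2p − 4. -/
open Finset

/-- Edge label for a negative (or ordinary) edge: sum of endpoint labels. -/
def negLabel (f : ℕ → ℕ) : Sym2 ℕ → ℕ :=
  Sym2.lift ⟨fun a b => f a + f b, fun a b => Nat.add_comm _ _⟩

/-- Edge label for a positive edge: absolute difference of endpoint labels. -/
def posLabel (f : ℕ → ℕ) : Sym2 ℕ → ℕ :=
  Sym2.lift ⟨fun a b => max (f a) (f b) - min (f a) (f b),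
    fun a b => by simp only []; rw [max_comm, min_comm]⟩

/-- A (p,q)-graph with vertex finset `Vs` and edge finset `E` is additively graceful:
there is an injective `f : Vs → {0,…,⌈(q+1)/2⌉}` whose induced edge sums are
distinct and exactly `{1,…,q}`.  (Note `⌈(q+1)/2⌉ = (q+2)/2` in `ℕ`.) -/
def IsAddGracefulGraph (Vs : Finset ℕ) (E : Finset (Sym2 ℕ)) : Prop :=
  ∃ f : ℕ → ℕ, Set.InjOn f ↑Vs ∧ (∀ v ∈ Vs, f v ≤ (E.card + 2) / 2) ∧
    Set.InjOn (negLabel f) ↑E ∧ E.image (negLabel f) = Finset.Icc 1 E.card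

/-- A signed graph with vertex finset `Vs`, positive edges `P` (m := P.card) and
negative edges `N` (n := N.card) is additively graceful: there is an injective
`f : Vs → {0,…,m + ⌈(n+1)/2⌉}` with positive-edge labels `|f u - f v|` exactly
`{1,…,m}` and negative-edge labels `f u + f v` exactly `{1,…,n}`. -/
def IsAddGracefulSigned (Vs : Finset ℕ) (P N : Finset (Sym2 ℕ)) : Prop :=
  ∃ f : ℕ → ℕ, Set.InjOn f ↑Vs ∧
    (∀ v ∈ Vs, f v ≤ P.card + (N.card + 2) / 2) ∧
    Set.InjOn (posLabel f) ↑P ∧ P.image (posLabel f) = Finset.Icc 1 P.card ∧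
    Set.InjOn (negLabel f) ↑N ∧ N.image (negLabel f) = Finset.Icc 1 N.card

/-- If a simple graph with `p` vertices and `q ≥ 1` edges (no loops, all edges on
the vertex set) admits an additively graceful labeling, then `q ≥ 2p - 4`. -/
theorem stmt_0 (Vs : Finset ℕ) (E : Finset (Sym2 ℕ)) (hq : 1 ≤ E.card)
    (hsub : ∀ e ∈ E, ∀ a ∈ e, a ∈ Vs) (hloop : ∀ e ∈ E, ¬ e.IsDiag)
    (h : IsAddGracefulGraph Vs E) :
    (E.card : ℤ) ≥ 2 * (Vs.card : ℤ) - 4 := by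
  obtain ⟨f, hinj, hbd, -, -⟩ := h
  have hcard : Vs.card ≤ (E.card + 2) / 2 + 1 := by
    have := Finset.card_le_card_of_injOn f
      (fun v hv => Finset.mem_range.mpr (Nat.lt_succ_of_le (hbd v hv))) hinj
    simpa using this
  have h2 : (E.card + 2) / 2 * 2 ≤ E.card + 2 := Nat.div_mul_le_self _ _
  omega
end

section
/- The signed graph obtained from an all-negative path P3 = (u, v, w) by joining m ≥ 1 new pendant vertices to w by positive edges is an additively graceful signed graph. -/
open Finset

/-- The signed graph from an all-negative `P₃ = (0,1,2)` with `m ≥ 1` pendant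
vertices `3,…,m+2` joined to `2` by positive edges is additively graceful. -/
theorem stmt_1 (m : ℕ) (hm : 1 ≤ m) :
    IsAddGracefulSigned (Finset.range (m + 3))
      ((Finset.Icc 3 (m + 2)).image fun i => s(2, i))
      {s(0, 1), s(1, 2)} := by
  set f : ℕ → ℕ := fun n => if n = 0 then 1 else if n = 1 then 0 else n with hf
  have hpos : ∀ i, 3 ≤ i → posLabel f s(2, i) = i - 2 := by
    intro i hi
    have h2 : f 2 = 2 := rfl
    have hfi : f i = i := by
      simp only [hf]; rw [if_neg (by omega), if_neg (by omega)]
    simp only [posLabel, Sym2.lift_mk]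
    rw [h2, hfi]
    omega
  have hinj : Function.Injective fun i : ℕ => s(2, i) := fun a b h =>
    Sym2.congr_right.mp h
  have hPcard : ((Finset.Icc 3 (m + 2)).image fun i => s(2, i)).card = m := by
    rw [Finset.card_image_of_injective _ hinj, Nat.card_Icc]; omega
  have hNcard : ({s(0, 1), s(1, 2)} : Finset (Sym2 ℕ)).card = 2 := by
    rw [Finset.card_insert_of_notMem (by simp [Sym2.eq_iff]), Finset.card_singleton]
  refine ⟨f, ?_, ?_, ?_, ?_, ?_, ?_⟩
  · intro a _ b _ h
    simp only [hf] at h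
    split_ifs at h <;> omega
  · intro v hv
    simp only [Finset.mem_range] at hv
    rw [hPcard, hNcard]
    simp only [hf]
    split_ifs <;> omega
  · intro e he e' he' h
    simp only [Finset.coe_image, Set.mem_image, Finset.mem_coe, Finset.mem_Icc] at he he'
    obtain ⟨i, hi, rfl⟩ := he
    obtain ⟨j, hj, rfl⟩ := he'
    rw [hpos i hi.1, hpos j hj.1] at h
    have : i = j := by omega
    rw [this]
  · rw [hPcard, Finset.image_image]
    ext x
    simp only [Finset.mem_image, Finset.mem_Icc, Function.comp]
    constructor
    · rintro ⟨i, hi, rfl⟩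
      rw [hpos i hi.1]
      omega
    · rintro ⟨h1, h2⟩
      exact ⟨x + 2, by omega, by rw [hpos (x + 2) (by omega)]; omega⟩
  · intro e he e' he' h
    simp only [Finset.coe_insert, Set.mem_insert_iff, Finset.coe_singleton,
      Set.mem_singleton_iff] at he he'
    have v1 : negLabel f s(0, 1) = 1 := by simp [negLabel, hf]
    have v2 : negLabel f s(1, 2) = 2 := by simp [negLabel, hf]
    rcases he with rfl | rfl <;> rcases he' with rfl | rfl <;>
      simp_all
  · rw [hNcard]
    have v1 : negLabel f s(0, 1) = 1 := by simp [negLabel, hf]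
    have v2 : negLabel f s(1, 2) = 2 := by simp [negLabel, hf]
    rw [Finset.image_insert, Finset.image_singleton, v1, v2]
    decide
end

section
/- A signed star K_{1,p} with exactly one negative edge and p − 1 positive edges admits an additively graceful labeling. -/
open Finset

/-- A signed star `K_{1,p}` (center 0, pendants 1,…,p) with exactly one negative
edge `{0,1}` and `p-1` positive edges admits an additively graceful labeling. -/
theorem stmt_4 (p : ℕ) (hp : 1 ≤ p) :
    IsAddGracefulSigned (Finset.range (p + 1))
      ((Finset.Icc 2 p).image fun i => s(0, i))
      {s(0, 1)} := by
  set f : ℕ → ℕ := fun i => if i = 0 then 1 else if i = 1 then 0 else i with hf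
  have hinj : ∀ i j, s(0, i) = s(0, j) → i = j := by
    intro i j h
    rw [Sym2.eq_iff] at h
    omega
  have hPcard : ((Finset.Icc 2 p).image fun i => s(0, i)).card = p - 1 := by
    rw [Finset.card_image_of_injective _ fun i j h => hinj i j h, Nat.card_Icc]
    omega
  have hpl : ∀ i, 2 ≤ i → posLabel f s(0, i) = i - 1 := by
    intro i hi
    simp only [posLabel, Sym2.lift_mk, hf]
    rw [if_pos trivial, if_neg (by omega : ¬ i = 0), if_neg (by omega : ¬ i = 1)]
    omega
  refine ⟨f, ?_, ?_, ?_, ?_, ?_, ?_⟩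
  · intro a _ b _ h
    simp only [hf] at h
    split_ifs at h <;> omega
  · intro v hv
    simp only [Finset.mem_range] at hv
    rw [hPcard]
    simp only [hf, Finset.card_singleton]
    split_ifs <;> omega
  · intro e1 he1 e2 he2 h
    simp only [Finset.coe_image, Set.mem_image, Finset.mem_coe, Finset.mem_Icc] at he1 he2
    obtain ⟨i, hi, rfl⟩ := he1
    obtain ⟨j, hj, rfl⟩ := he2
    rw [hpl i hi.1, hpl j hj.1] at h
    have : i = j := by omega
    subst this; rfl
  · rw [hPcard]
    ext k
    simp only [Finset.image_image, Function.comp, Finset.mem_image, Finset.mem_Icc]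
    constructor
    · rintro ⟨i, hi, rfl⟩
      rw [hpl i hi.1]
      omega
    · rintro ⟨h1, h2⟩
      exact ⟨k + 1, by omega, by rw [hpl (k + 1) (by omega)]; omega⟩
  · simp
  · simp only [Finset.image_singleton, Finset.card_singleton]
    have : negLabel f s(0, 1) = 1 := by simp [negLabel, hf]
    rw [this]
    rfl
end

section
/- The signed bistar B(m,1), obtained from a positive edge uv by attaching m − 1 pendant vertices to u by positive edges and one pendant vertex w to v by a negative edge, admits an additively graceful labeling. -/
open Finset

/-- The signed bistar `B(m,1)`: positive edge `uv` (u = 0, v = 1), `m - 1`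
positive pendant edges at `u` (to `3,…,m+1`), and one negative edge `vw`
(w = 2), admits an additively graceful labeling. -/
theorem stmt_5 (m : ℕ) (hm : 1 ≤ m) :
    IsAddGracefulSigned (Finset.range (m + 2))
      (insert s(0, 1) ((Finset.Icc 3 (m + 1)).image fun i => s(0, i)))
      {s(1, 2)} := by
  set f : ℕ → ℕ := fun x => if x = 0 then m + 1 else if x = 1 then 1
    else if x = 2 then 0 else m + 3 - x with hf
  set P : Finset (Sym2 ℕ) :=
    insert s(0, 1) ((Finset.Icc 3 (m + 1)).image fun i => s(0, i)) with hP
  -- image of posLabel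
  have hlab1 : posLabel f s(0, 1) = m := by simp [posLabel, hf]
  have hlabi : ∀ i ∈ Finset.Icc 3 (m + 1), posLabel f s(0, i) = i - 2 := by
    intro i hi
    simp only [Finset.mem_Icc] at hi
    have h1 : f 0 = m + 1 := by simp [hf]
    have h2 : f i = m + 3 - i := by
      simp only [hf]
      rw [if_neg (by omega), if_neg (by omega), if_neg (by omega)]
    simp only [posLabel, Sym2.lift_mk, h1, h2]
    omega
  have himg : P.image (posLabel f) = Finset.Icc 1 m := by
    rw [hP, Finset.image_insert, Finset.image_image, hlab1]
    have : ((Finset.Icc 3 (m + 1)).image fun i => posLabel f s(0, i))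
        = (Finset.Icc 3 (m + 1)).image fun i => i - 2 := by
      apply Finset.image_congr
      intro i hi
      exact hlabi i hi
    rw [show (posLabel f ∘ fun i => s(0, i)) = fun i => posLabel f s(0, i) from rfl, this]
    ext x
    simp only [Finset.mem_insert, Finset.mem_image, Finset.mem_Icc]
    constructor
    · rintro (rfl | ⟨i, hi, rfl⟩) <;> omega
    · intro hx
      rcases eq_or_lt_of_le hx.2 with h | h
      · left; omega
      · right; exact ⟨x + 2, by omega, by omega⟩
  have hcard : P.card = m := by
    have h1 : P.card ≤ m := by
      refine le_trans (Finset.card_insert_le _ _) ?_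
      have := Finset.card_image_le (s := Finset.Icc 3 (m + 1)) (f := fun i => s(0, i))
      rw [Nat.card_Icc] at this
      omega
    have h2 : m ≤ P.card := by
      have := Finset.card_image_le (s := P) (f := posLabel f)
      rw [himg, Nat.card_Icc] at this
      omega
    omega
  refine ⟨f, ?_, ?_, ?_, ?_, ?_, ?_⟩
  · -- InjOn f on range (m+2)
    intro a ha b hb h
    simp only [Finset.coe_range, Set.mem_Iio] at ha hb
    simp only [hf] at h
    split_ifs at h <;> omega
  · intro v hv
    simp only [Finset.mem_range] at hv
    rw [hcard]
    simp only [Finset.card_singleton, hf]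
    split_ifs <;> omega
  · exact Finset.card_image_iff.mp (by rw [himg, Nat.card_Icc, hcard]; omega)
  · rw [hcard]; exact himg
  · intro a ha b hb h
    simp only [Finset.coe_singleton, Set.mem_singleton_iff] at ha hb
    rw [ha, hb]
  · simp [negLabel, hf]
end

section
/- The signed graph ST, obtained from an all-negative triangle K_3 on vertices u, v, w by joining m ≥ 1 new pendant vertices to w by positive edges, admits an additively graceful labeling. -/
open Finset

/-- `ST`: an all-negative triangle on `0,1,2` with `m ≥ 1` pendant vertices
`3,…,m+2` joined to `2` by positive edges, admits an additively graceful
labeling. -/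
theorem stmt_6 (m : ℕ) (hm : 1 ≤ m) :
    IsAddGracefulSigned (Finset.range (m + 3))
      ((Finset.Icc 3 (m + 2)).image fun i => s(2, i))
      {s(0, 1), s(0, 2), s(1, 2)} := by
  have negid : ∀ a b : ℕ, negLabel id s(a, b) = a + b := fun a b => rfl
  have posid : ∀ a b : ℕ, posLabel id s(a, b) = max a b - min a b := fun a b => rfl
  have hNcard : ({s(0, 1), s(0, 2), s(1, 2)} : Finset (Sym2 ℕ)).card = 3 := by decide
  have hPcard : ((Finset.Icc 3 (m + 2)).image fun i => s(2, i)).card = m := by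
    rw [Finset.card_image_of_injOn, Nat.card_Icc]
    · omega
    · intro a ha b hb h
      simp only [Finset.coe_Icc, Set.mem_Icc] at ha hb
      rw [Sym2.eq_iff] at h
      omega
  refine ⟨id, fun a _ b _ h => h, ?_, ?_, ?_, ?_, ?_⟩
  · intro v hv
    rw [hPcard, hNcard]
    simp only [Finset.mem_range] at hv
    simp only [id]
    omega
  · intro x hx y hy h
    simp only [Finset.coe_image, Set.mem_image, Finset.mem_coe, Finset.mem_Icc] at hx hy
    obtain ⟨i, hi, rfl⟩ := hx
    obtain ⟨j, hj, rfl⟩ := hy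
    rw [posid, posid] at h
    have : i = j := by omega
    subst this; rfl
  · rw [hPcard, Finset.image_image]
    ext b
    simp only [Finset.mem_image, Finset.mem_Icc, Function.comp]
    constructor
    · rintro ⟨i, hi, rfl⟩
      rw [posid]
      omega
    · rintro hb
      exact ⟨b + 2, by omega, by rw [posid]; omega⟩
  · intro x hx y hy h
    simp only [Finset.coe_insert, Set.mem_insert_iff, Finset.coe_singleton,
      Set.mem_singleton_iff] at hx hy
    rcases hx with rfl | rfl | rfl <;> rcases hy with rfl | rfl | rfl <;>
      simp_all [negid]
  · rw [hNcard]
    decide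
end

section
/- The signed graph STE, obtained from a triangle K_3 on vertices u, v, w with exactly one negative edge uw (edges uv and vw positive) by joining m ≥ 1 new pendant vertices to w by positive edges, admits an additively graceful labeling. -/
open Finset

/-- `STE`: a triangle on `u = 0, v = 1, w = 2` with one negative edge `uw`,
positive edges `uv`, `vw`, and `m ≥ 1` positive pendant edges at `w`
(to `3,…,m+2`), admits an additively graceful labeling. -/
theorem stmt_7 (m : ℕ) (hm : 1 ≤ m) :
    IsAddGracefulSigned (Finset.range (m + 3))
      (insert s(0, 1) (insert s(1, 2) ((Finset.Icc 3 (m + 2)).image fun i => s(2, i))))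
      {s(0, 2)} := by
  set f : ℕ → ℕ := fun n => if n = 0 then 1 else if n = 1 then 2 else if n = 2 then 0 else n with hf
  have hfinj : Function.Injective f := by
    intro a b h
    simp only [hf] at h
    split_ifs at h <;> omega
  have hf0 : f 0 = 1 := rfl
  have hf1 : f 1 = 2 := rfl
  have hf2 : f 2 = 0 := rfl
  have hfi : ∀ i, 3 ≤ i → f i = i := by
    intro i hi; simp only [hf]; split_ifs <;> omega
  -- mem facts
  have h01 : (s(0,1) : Sym2 ℕ) ∉ insert s(1,2) ((Finset.Icc 3 (m + 2)).image fun i => s(2, i)) := by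
    simp only [Finset.mem_insert, Finset.mem_image, Finset.mem_Icc, Sym2.eq_iff]
    push_neg
    constructor
    · omega
    · intro i hi; omega
  have h12 : (s(1,2) : Sym2 ℕ) ∉ (Finset.Icc 3 (m + 2)).image fun i => s(2, i) := by
    simp only [Finset.mem_image, Finset.mem_Icc, Sym2.eq_iff]
    push_neg
    intro i hi; omega
  have himinj : Set.InjOn (fun i => (s(2, i) : Sym2 ℕ)) ↑(Finset.Icc 3 (m + 2)) := by
    intro a ha b hb h
    simp only [Finset.coe_Icc, Set.mem_Icc] at ha hb
    simp only [Sym2.eq_iff] at h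
    omega
  have hPcard : (insert s(0, 1) (insert s(1, 2)
      ((Finset.Icc 3 (m + 2)).image fun i => s(2, i)))).card = m + 2 := by
    rw [Finset.card_insert_of_notMem h01, Finset.card_insert_of_notMem h12,
      Finset.card_image_of_injOn himinj, Nat.card_Icc]
    omega
  have hpos01 : posLabel f s(0,1) = 1 := by simp [posLabel, hf0, hf1]
  have hpos12 : posLabel f s(1,2) = 2 := by simp [posLabel, hf1, hf2]
  have hpos2i : ∀ i ∈ Finset.Icc 3 (m+2), posLabel f s(2,i) = i := by
    intro i hi
    simp only [Finset.mem_Icc] at hi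
    simp [posLabel, hf2, hfi i hi.1]
  have hPimage : (insert s(0, 1) (insert s(1, 2)
      ((Finset.Icc 3 (m + 2)).image fun i => s(2, i)))).image (posLabel f)
      = Finset.Icc 1 (m + 2) := by
    rw [Finset.image_insert, Finset.image_insert, Finset.image_image, hpos01, hpos12]
    simp only [Function.comp_def]
    rw [Finset.image_congr (g := id) (fun i hi => hpos2i i hi), Finset.image_id]
    ext x
    simp only [Finset.mem_insert, Finset.mem_Icc]
    omega
  refine ⟨f, hfinj.injOn, ?_, ?_, ?_, ?_, ?_⟩
  · intro v hv
    simp only [Finset.mem_coe, Finset.mem_range] at hv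
    rw [hPcard]
    simp only [Finset.card_singleton]
    simp only [hf]
    split_ifs <;> omega
  · apply Finset.injOn_of_card_image_eq
    rw [hPimage, hPcard, Nat.card_Icc]
    omega
  · rw [hPcard]; exact hPimage
  · exact Finset.coe_singleton s(0,2) ▸ Set.injOn_singleton _ _
  · simp [negLabel, hf0, hf2]
end

section
/- The signed graph obtained from an all-negative complete graph K_4 on vertices u, v, w, x by joining m ≥ 1 new pendant vertices to x by positive edges is an additively graceful signed graph. -/
open Finset

/-- The labeling: `0,1,2` fixed, everything else shifted by one (so `f 3 = 4`). -/
def f8 : ℕ → ℕ := fun i => if i < 3 then i else i + 1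

lemma f8_inj : Function.Injective f8 := by
  intro a b h
  simp only [f8] at h
  split_ifs at h <;> omega

/-- The signed graph from an all-negative `K₄` on `0,1,2,3` with `m ≥ 1`
pendant vertices `4,…,m+3` joined to `x = 3` by positive edges is additively
graceful. -/
theorem stmt_8 (m : ℕ) (hm : 1 ≤ m) :
    IsAddGracefulSigned (Finset.range (m + 4))
      ((Finset.Icc 4 (m + 3)).image fun i => s(3, i))
      {s(0, 1), s(0, 2), s(0, 3), s(1, 2), s(1, 3), s(2, 3)} := by
  have hP : ((Finset.Icc 4 (m + 3)).image fun i => s(3, i)).card = m := by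
    rw [Finset.card_image_of_injOn, Nat.card_Icc]
    · omega
    · intro a ha b hb h
      simp only [Finset.coe_Icc, Set.mem_Icc] at ha hb
      rw [Sym2.eq_iff] at h
      omega
  have hN : ({s(0, 1), s(0, 2), s(0, 3), s(1, 2), s(1, 3), s(2, 3)} :
      Finset (Sym2 ℕ)).card = 6 := by decide
  have hpos : ∀ i, 4 ≤ i → posLabel f8 s(3, i) = i - 3 := by
    intro i hi
    show max (f8 3) (f8 i) - min (f8 3) (f8 i) = i - 3
    simp only [f8]
    split_ifs <;> omega
  refine ⟨f8, f8_inj.injOn, ?_, ?_, ?_, ?_, ?_⟩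
  · intro v hv
    rw [hP, hN]
    rw [Finset.mem_range] at hv
    simp only [f8]
    split_ifs <;> omega
  · intro e he e' he' h
    simp only [Finset.coe_image, Set.mem_image, Finset.mem_coe, Finset.mem_Icc] at he he'
    obtain ⟨i, hi, rfl⟩ := he
    obtain ⟨j, hj, rfl⟩ := he'
    rw [hpos i hi.1, hpos j hj.1] at h
    have : i = j := by omega
    rw [this]
  · rw [hP, Finset.image_image]
    have h1 : Finset.image (posLabel f8 ∘ fun i => s(3, i)) (Finset.Icc 4 (m + 3)) =
        Finset.image (fun i => i - 3) (Finset.Icc 4 (m + 3)) := by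
      apply Finset.image_congr
      intro i hi
      simp only [Finset.coe_Icc, Set.mem_Icc] at hi
      exact hpos i hi.1
    rw [h1]
    ext x
    simp only [Finset.mem_image, Finset.mem_Icc]
    constructor
    · rintro ⟨i, hi, rfl⟩; omega
    · intro hx; exact ⟨x + 3, by omega, by omega⟩
  · intro e he e' he' h
    simp only [Finset.coe_insert, Set.mem_insert_iff, Finset.coe_singleton,
      Set.mem_singleton_iff] at he he'
    rcases he with rfl | rfl | rfl | rfl | rfl | rfl <;>
      rcases he' with rfl | rfl | rfl | rfl | rfl | rfl <;>
      first
        | rfl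
        | (exfalso; revert h; decide)
  · rw [hN]
    decide
end
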